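/- Let T = {1,…,n} and, for 1 ≤ i ≤ n, let R_i = {i} ∪ {n+1,…,2n−1}. Then η(v_T) = −( φ(v_T) + Σ_{i=1}^n (−1)^{i−1} φ(v_{R_i}) ). -/

import Mathlib

open Finset

/-- Number of inversions of a list. -/
def invCount {α : Type*} [LinearOrder α] (l : List α) : ℕ :=
  (Finset.univ.filter
    (fun p : Fin l.length × Fin l.length => p.1 < p.2 ∧ l.get p.2 < l.get p.1)).card

/-- The sign `(-1)^(number of inversions)` of the permutation sorting a list
with pairwise distinct entries into increasing order. -/
noncomputable def invSign {α : Type*} [LinearOrder α] (l : List α) : ℂ :=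
  (-1) ^ invCount l

/-- Replace the entry `a` by `b` (in place) in a list. -/
def replaceOne {α : Type*} [DecidableEq α] (l : List α) (a b : α) : List α :=
  l.map fun z => if z = a then b else z

open scoped Classical in
/-- Dirac delta: the basis vector corresponding to an index `r`. -/
noncomputable def delta {β : Type*} (r : β) : β → ℂ := fun r' => if r' = r then 1 else 0

/-- Index for the basis of ordered column tabloids of shape `(2^m, 1^{n-m})` on
`{1, …, n+m}` (identified with `Fin (n+m)`): such a tabloid is recorded by the
set `T` of entries of its first column (the second column is the complement). -/
abbrev Col (n m : ℕ) := {T : Finset (Fin (n + m)) // T.card = n}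

/-- The space `M̃` of column tabloids of shape `(2^m, 1^{n-m})`. -/
abbrev Mt (n m : ℕ) := Col n m → ℂ

lemma card_compl' {n m : ℕ} (T : Col n m) : (T.1ᶜ).card = m := by
  rw [Finset.card_compl, T.2, Fintype.card_fin]
  omega

/-- `yel T j` is the `(j+1)`-st smallest element of the complement of `T`
(i.e. of the second column). -/
noncomputable def yel {n m : ℕ} (T : Col n m) (j : Fin m) : Fin (n + m) :=
  (T.1ᶜ).orderEmbOfFin (card_compl' T) j

lemma yel_not_mem {n m : ℕ} (T : Col n m) (j : Fin m) : yel T j ∉ T.1 :=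
  Finset.mem_compl.mp (Finset.orderEmbOfFin_mem (T.1ᶜ) (card_compl' T) j)

/-- The first column obtained from `T` after exchanging `x ∈ T` with the
`(j+1)`-st smallest element of the complement. -/
noncomputable def swapSet {n m : ℕ} (T : Col n m) (x : Fin (n + m)) (j : Fin m) :
    Finset (Fin (n + m)) :=
  insert (yel T j) (T.1.erase x)

lemma swapSet_card {n m : ℕ} (T : Col n m) {x : Fin (n + m)} (hx : x ∈ T.1) (j : Fin m) :
    (swapSet T x j).card = n := by
  have h0 : 0 < n := T.2 ▸ Finset.card_pos.mpr ⟨x, hx⟩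
  rw [swapSet, Finset.card_insert_of_notMem
      (fun h => yel_not_mem T j (Finset.mem_of_mem_erase h)),
    Finset.card_erase_of_mem hx, T.2]
  omega

/-- `swap_{x,j}(T)`: the signed basis vector obtained from `T` by exchanging
`x` (in the first column) with the `(j+1)`-st entry of the second column in
place, the sign `ε` being the product of the signs of the two permutations
re-sorting the two columns. -/
noncomputable def swapTerm {n m : ℕ} (T : Col n m) (x : {a // a ∈ T.1}) (j : Fin m) :
    Mt n m :=
  (invSign (replaceOne (T.1.sort (· ≤ ·)) x.1 (yel T j)) *
      invSign (replaceOne ((T.1ᶜ).sort (· ≤ ·)) (yel T j) x.1)) •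
    delta (⟨swapSet T x.1 j, swapSet_card T x.2 j⟩ : Col n m)

/-- The operator `η` on the basis vector `v_T`. -/
noncomputable def etaBasis {n m : ℕ} (T : Col n m) : Mt n m :=
  (m : ℂ) • delta T - ∑ j : Fin m, ∑ x ∈ T.1.attach, swapTerm T x j

/-- The operator `η : M̃ → M̃`, extended linearly from the basis. -/
noncomputable def etaFun {n m : ℕ} (f : Mt n m) : Mt n m :=
  ∑ T : Col n m, f T • etaBasis T

/-- `η` as a linear map. -/
noncomputable def etaLin (n m : ℕ) : Mt n m →ₗ[ℂ] Mt n m where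
  toFun := etaFun
  map_add' f g := by
    simp [etaFun, add_smul, Finset.sum_add_distrib]
  map_smul' c f := by
    simp [etaFun, Finset.smul_sum, smul_smul]

/-- The sign picked up when re-sorting the two columns after relabelling by `σ`. -/
noncomputable def actSign {n m : ℕ} (σ : Equiv.Perm (Fin (n + m))) (T : Col n m) : ℂ :=
  invSign ((T.1.sort (· ≤ ·)).map ⇑σ) * invSign (((T.1ᶜ).sort (· ≤ ·)).map ⇑σ)

lemma image_card {n m : ℕ} (σ : Equiv.Perm (Fin (n + m))) (T : Col n m) :
    (T.1.image ⇑σ).card = n := by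
  rw [Finset.card_image_of_injective _ σ.injective, T.2]

/-- The (signed) action of `S_{n+m}` on the space of column tabloids:
`σ • v_T = sgn(sort₁) sgn(sort₂) v_{σ(T)}`, extended linearly. -/
noncomputable def act {n m : ℕ} (σ : Equiv.Perm (Fin (n + m))) (f : Mt n m) : Mt n m :=
  ∑ T : Col n m, f T •
    (actSign σ T • delta (⟨T.1.image ⇑σ, image_card σ T⟩ : Col n m))

section SpechtSide

variable (γ : Type*) [Fintype γ] [DecidableEq γ] (p q : ℕ)

/-- A bijective Young tableau of the two-column shape with column lengths
`p` (first column) and `q` (second column), with entries in `γ`: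
a bijection from the cells to the entries. -/
abbrev Tabl := (Fin p ⊕ Fin q) ≃ γ

/-- `rows` is a row tabloid of shape `(2^q, 1^{p-q})`: the first `q` rows are
unordered pairs, the remaining rows singletons, all pairwise disjoint
(together they then necessarily partition `γ`). -/
def IsRowTab (rows : Fin p → Finset γ) : Prop :=
  (∀ i, (rows i).card = if (i : ℕ) < q then 2 else 1) ∧
  ∀ i j, i ≠ j → Disjoint (rows i) (rows j)

/-- Row tabloids of shape `(2^q, 1^{p-q})`. -/
abbrev RowTab := {rows : Fin p → Finset γ // IsRowTab γ p q rows}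

/-- The permutation module `M^{(2^q,1^{p-q})}`, with basis the row tabloids. -/
abbrev MP := RowTab γ p q → ℂ

variable {γ p q}

/-- The rows of a tableau. -/
def rowsOf (t : Tabl γ p q) : Fin p → Finset γ := fun i =>
  if h : (i : ℕ) < q then {t (Sum.inl i), t (Sum.inr ⟨(i : ℕ), h⟩)}
  else {t (Sum.inl i)}

lemma mem_rowsOf {t : Tabl γ p q} {i : Fin p} {a : γ} (ha : a ∈ rowsOf t i) :
    a = t (Sum.inl i) ∨ ∃ h : (i : ℕ) < q, a = t (Sum.inr ⟨(i : ℕ), h⟩) := by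
  unfold rowsOf at ha
  split_ifs at ha with h
  · rcases Finset.mem_insert.mp ha with h1 | h1
    · exact Or.inl h1
    · exact Or.inr ⟨h, Finset.mem_singleton.mp h1⟩
  · exact Or.inl (Finset.mem_singleton.mp ha)

lemma isRowTab_rowsOf (t : Tabl γ p q) : IsRowTab γ p q (rowsOf t) := by
  constructor
  · intro i
    by_cases h : (i : ℕ) < q
    · rw [rowsOf, dif_pos h, if_pos h]
      exact Finset.card_pair (t.injective.ne (by simp))
    · rw [rowsOf, dif_neg h, if_neg h]
      exact Finset.card_singleton _
  · intro i j hij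
    rw [Finset.disjoint_left]
    intro a ha hb
    rcases mem_rowsOf ha with h1 | ⟨hi, h1⟩ <;> rcases mem_rowsOf hb with h2 | ⟨hj, h2⟩
    · exact hij (Sum.inl.inj (t.injective (h1.symm.trans h2)))
    · simpa using t.injective (h1.symm.trans h2)
    · simpa using t.injective (h1.symm.trans h2)
    · refine hij (Fin.ext ?_)
      have h3 := Sum.inr.inj (t.injective (h1.symm.trans h2))
      simpa using congrArg Fin.val h3

/-- The row tabloid `{t}` of a tableau `t`. -/
def rowTabOf (t : Tabl γ p q) : RowTab γ p q := ⟨rowsOf t, isRowTab_rowsOf t⟩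

/-- The column stabilizer `C_t` of a tableau: permutations preserving each
column setwise. -/
def colStab (t : Tabl γ p q) : Finset (Equiv.Perm γ) :=
  Finset.univ.filter fun σ =>
    (∀ i : Fin p, ∃ i' : Fin p, σ (t (Sum.inl i)) = t (Sum.inl i')) ∧
    (∀ j : Fin q, ∃ j' : Fin q, σ (t (Sum.inr j)) = t (Sum.inr j'))

/-- The polytabloid `ε_t = ∑_{β ∈ C_t} sgn(β) {β t}`. -/
noncomputable def polytab (t : Tabl γ p q) : MP γ p q :=
  ∑ σ ∈ colStab t, ((Equiv.Perm.sign σ : ℤ) : ℂ) • delta (rowTabOf (t.trans σ))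

variable (γ p q) in
/-- The Specht module `S^{(2^q,1^{p-q})}`: the span of all polytabloids. -/
noncomputable def SpechtMod : Submodule ℂ (MP γ p q) :=
  Submodule.span ℂ (Set.range (polytab (γ := γ) (p := p) (q := q)))

/-- The entrywise action of a permutation on a row tabloid. -/
def rowAct (σ : Equiv.Perm γ) (r : RowTab γ p q) : RowTab γ p q :=
  ⟨fun i => (r.1 i).image ⇑σ, by
    obtain ⟨h1, h2⟩ := r.2
    refine ⟨fun i => ?_, fun i j hij => ?_⟩
    · rw [Finset.card_image_of_injective _ σ.injective]; exact h1 i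
    · exact (Finset.disjoint_image σ.injective).mpr (h2 i j hij)⟩

/-- The entrywise `S_N`-action on the permutation module. -/
noncomputable def actP (σ : Equiv.Perm γ) (f : MP γ p q) : MP γ p q :=
  fun r => f (rowAct σ⁻¹ r)

end SpechtSide

/-- The tableau `t(T)` whose first column is `T` in increasing order and whose
second column is the complement of `T` in increasing order. -/
noncomputable def tabOf {n m : ℕ} (T : Col n m) : Tabl (Fin (n + m)) n m :=
  Equiv.ofBijective
    (Sum.elim (fun i => T.1.orderEmbOfFin T.2 i)
      (fun j => (T.1ᶜ).orderEmbOfFin (card_compl' T) j))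
    (by
      rw [Fintype.bijective_iff_injective_and_card]
      refine ⟨?_, by simp⟩
      rintro (i | i) (j | j) h <;> simp only [Sum.elim_inl, Sum.elim_inr] at h
      · exact congrArg Sum.inl ((T.1.orderEmbOfFin T.2).injective h)
      · have h1 := Finset.orderEmbOfFin_mem T.1 T.2 i
        have h2 := Finset.orderEmbOfFin_mem (T.1ᶜ) (card_compl' T) j
        rw [h] at h1
        simp only [Finset.mem_compl] at h2
        exact absurd h1 h2
      · have h1 := Finset.orderEmbOfFin_mem T.1 T.2 j
        have h2 := Finset.orderEmbOfFin_mem (T.1ᶜ) (card_compl' T) i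
        rw [← h] at h1
        simp only [Finset.mem_compl] at h2
        exact absurd h1 h2
      · exact congrArg Sum.inr (((T.1ᶜ).orderEmbOfFin (card_compl' T)).injective h))

/-- The `S_N`-equivariant map `α : M̃ → M^{(2^m,1^{n-m})}`, sending `v_T` to the
polytabloid `ε_{t(T)}` (its image is the Specht module). -/
noncomputable def alphaLin (n m : ℕ) : Mt n m →ₗ[ℂ] MP (Fin (n + m)) n m where
  toFun f := ∑ T : Col n m, f T • polytab (tabOf T)
  map_add' f g := by simp [add_smul, Finset.sum_add_distrib]
  map_smul' c f := by simp [Finset.smul_sum, smul_smul]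

/-- `φ(v_T)`, encoding the generalized Jacobi identity (for shape `(2^{n-1},1)`,
i.e. `n = m + 1`):
`φ(v_T) = v_T − ∑_{i=1}^n (−1)^{n−i} sgn(c_i) v_{Tᶜ ∪ {x_i}}` where
`x_i` is the `i`-th smallest element of `T` and `c_i` sorts `(y_1,…,y_{n−1},x_i)`. -/
noncomputable def phiBasis {n m : ℕ} (h : n = m + 1) (T : Col n m) : Mt n m :=
  delta T - ∑ i : Fin n,
    ((-1 : ℂ) ^ (n - 1 - (i : ℕ)) *
        invSign ((T.1ᶜ).sort (· ≤ ·) ++ [T.1.orderEmbOfFin T.2 i])) •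
      delta (⟨insert (T.1.orderEmbOfFin T.2 i) T.1ᶜ, by
        rw [Finset.card_insert_of_notMem (by
            simpa using Finset.orderEmbOfFin_mem T.1 T.2 i),
          card_compl']
        omega⟩ : Col n m)

/-- The map `φ : M̃ → M̃`, extended linearly; `ker φ ≅ ρ_{n,3}`. -/
noncomputable def phiFun {n m : ℕ} (h : n = m + 1) (f : Mt n m) : Mt n m :=
  ∑ T : Col n m, f T • phiBasis h T

/-- `φ` as a linear map. -/
noncomputable def phiLin (n m : ℕ) (h : n = m + 1) : Mt n m →ₗ[ℂ] Mt n m where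
  toFun := phiFun h
  map_add' f g := by simp [phiFun, add_smul, Finset.sum_add_distrib]
  map_smul' c f := by simp [phiFun, Finset.smul_sum, smul_smul]

/-! ### Auxiliary lemmas for Statement 7 -/

section Aux

lemma delta_sum_smul {ι : Type*} [Fintype ι] {M : Type*} [AddCommMonoid M] [Module ℂ M]
    (r : ι) (g : ι → M) : ∑ b : ι, delta r b • g b = g r := by
  classical
  rw [Finset.sum_eq_single r (fun b _ hb => by simp [delta, hb]) (by simp)]
  simp [delta]

/-- Inversion count of a function on `Fin k`. -/
def invCountF {α : Type*} [LinearOrder α] {k : ℕ} (f : Fin k → α) : ℕ :=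
  (Finset.univ.filter (fun p : Fin k × Fin k => p.1 < p.2 ∧ f p.2 < f p.1)).card

lemma invCount_ofFn {α : Type*} [LinearOrder α] {k : ℕ} (f : Fin k → α) :
    invCount (List.ofFn f) = invCountF f := by
  unfold invCount invCountF
  have hl : (List.ofFn f).length = k := List.length_ofFn
  refine Finset.card_equiv (Equiv.prodCongr (finCongr hl) (finCongr hl)) ?_
  intro p
  simp only [Finset.mem_filter, Finset.mem_univ, true_and, Equiv.prodCongr_apply,
    Prod.map_fst, Prod.map_snd, finCongr_apply, List.get_ofFn, Fin.lt_def, Fin.coe_cast]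

lemma pair_mem_cases {α : Type*} [LinearOrder α] {k : ℕ} {f : Fin k → α} {p : Fin k}
    (hmono : ∀ i j : Fin k, i < j → i ≠ p → j ≠ p → f i < f j)
    {q : Fin k × Fin k} (h1 : q.1 < q.2) (h2 : f q.2 < f q.1) : q.1 = p ∨ q.2 = p := by
  by_contra hc
  push_neg at hc
  exact absurd (hmono q.1 q.2 h1 hc.1 hc.2) (not_lt.mpr h2.le)

lemma invCountF_eq_single {α : Type*} [LinearOrder α] {k : ℕ} (f : Fin k → α) (p : Fin k)
    (hmono : ∀ i j : Fin k, i < j → i ≠ p → j ≠ p → f i < f j) :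
    invCountF f = (Finset.univ.filter (fun i : Fin k =>
      (i < p ∧ f p < f i) ∨ (p < i ∧ f i < f p))).card := by
  unfold invCountF
  refine Finset.card_bij' (fun q _ => if q.1 = p then q.2 else q.1)
    (fun i _ => if i < p then (i, p) else (p, i)) ?_ ?_ ?_ ?_
  · intro q hq
    simp only [Finset.mem_filter, Finset.mem_univ, true_and] at hq ⊢
    by_cases h1 : q.1 = p
    · rw [if_pos h1]
      exact Or.inr ⟨by rw [← h1]; exact hq.1, by rw [← h1]; exact hq.2⟩
    · rw [if_neg h1]
      rcases pair_mem_cases hmono hq.1 hq.2 with h | h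
      · exact absurd h h1
      · exact Or.inl ⟨by rw [← h]; exact hq.1, by rw [← h]; exact hq.2⟩
  · intro i hi
    simp only [Finset.mem_filter, Finset.mem_univ, true_and] at hi ⊢
    rcases hi with ⟨h1, h2⟩ | ⟨h1, h2⟩
    · rw [if_pos h1]; exact ⟨h1, h2⟩
    · rw [if_neg (not_lt.mpr h1.le)]; exact ⟨h1, h2⟩
  · intro q hq
    simp only [Finset.mem_filter, Finset.mem_univ, true_and] at hq
    by_cases h1 : q.1 = p
    · rw [if_pos h1, if_neg (show ¬ q.2 < p by rw [← h1]; exact not_lt.mpr hq.1.le), ← h1]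
    · have hq2 : q.2 = p := (pair_mem_cases hmono hq.1 hq.2).resolve_left h1
      rw [if_neg h1, if_pos (show q.1 < p by rw [← hq2]; exact hq.1), ← hq2]
  · intro i _
    by_cases h1 : i < p
    · rw [if_pos h1]
      exact if_neg (ne_of_lt h1)
    · rw [if_neg h1]
      exact if_pos rfl

lemma invCount_replace {α : Type*} [LinearOrder α] {k : ℕ} (g : Fin k → α) (hg : StrictMono g)
    (p : Fin k) (x : α) :
    invCount (List.ofFn (fun a => if a = p then x else g a)) =
      (Finset.univ.filter (fun a : Fin k => (a < p ∧ x < g a) ∨ (p < a ∧ g a < x))).card := by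
  rw [invCount_ofFn, invCountF_eq_single _ p
    (fun i j hij hi hj => by rw [if_neg hi, if_neg hj]; exact hg hij)]
  congr 1
  ext a
  simp only [Finset.mem_filter, Finset.mem_univ, true_and, if_pos rfl, if_true]
  by_cases hap : a = p
  · subst hap
    simp [lt_irrefl]
  · rw [if_neg hap]

lemma ofFn_append_singleton {α : Type*} {k : ℕ} (g : Fin k → α) (x : α) :
    List.ofFn g ++ [x] = List.ofFn (Fin.snoc g x) := by
  rw [List.ofFn_succ' (Fin.snoc g x)]
  simp only [Fin.snoc_castSucc, Fin.snoc_last, List.concat_eq_append]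

lemma invCount_sorted_append {α : Type*} [LinearOrder α] {k : ℕ} (g : Fin k → α)
    (hg : StrictMono g) (x : α) :
    invCount (List.ofFn g ++ [x]) =
      (Finset.univ.filter (fun b : Fin k => x < g b)).card := by
  rw [ofFn_append_singleton, invCount_ofFn,
    invCountF_eq_single _ (Fin.last k) ?hm]
  case hm =>
    intro i j hij hi hj
    obtain ⟨i', rfl⟩ := Fin.exists_castSucc_eq.mpr hi
    obtain ⟨j', rfl⟩ := Fin.exists_castSucc_eq.mpr hj
    rw [Fin.snoc_castSucc, Fin.snoc_castSucc]
    exact hg (Fin.castSucc_lt_castSucc_iff.mp hij)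
  symm
  refine Finset.card_nbij (fun b => Fin.castSucc b) ?_ ?_ ?_
  · intro b hb
    simp only [Finset.mem_coe, Finset.mem_filter, Finset.mem_univ, true_and] at hb ⊢
    exact Or.inl ⟨Fin.castSucc_lt_last b, by rw [Fin.snoc_last, Fin.snoc_castSucc]; exact hb⟩
  · intro a _ b _ h
    exact Fin.castSucc_injective k h
  · intro b hb
    simp only [Finset.coe_filter, Finset.mem_univ, true_and, Set.mem_setOf_eq] at hb
    rcases hb with ⟨hb1, hb2⟩ | ⟨hb1, _⟩
    · obtain ⟨b', rfl⟩ := Fin.exists_castSucc_eq.mpr (Fin.ne_of_lt hb1)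
      rw [Fin.snoc_last, Fin.snoc_castSucc] at hb2
      exact ⟨b', by simpa using hb2, rfl⟩
    · exact absurd hb1 (not_lt.mpr (Fin.le_last b))

lemma neg_one_pow_mul_self (a : ℕ) : ((-1 : ℂ)) ^ a * (-1) ^ a = 1 := by
  rw [← pow_add, ← two_mul, pow_mul, neg_one_sq, one_pow]

lemma neg_one_pow_sub' {a b : ℕ} (h : a ≤ b) :
    ((-1 : ℂ)) ^ (b - a) = (-1) ^ b * (-1) ^ a := by
  have h1 : ((-1 : ℂ)) ^ (b - a) * ((-1) ^ a * (-1) ^ a) = (-1) ^ (b - a) := by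
    rw [neg_one_pow_mul_self, mul_one]
  calc ((-1 : ℂ)) ^ (b - a) = (-1) ^ (b - a) * ((-1) ^ a * (-1) ^ a) := by rw [h1]
    _ = ((-1) ^ (b - a) * (-1) ^ a) * (-1) ^ a := by ring
    _ = (-1) ^ b * (-1) ^ a := by rw [← pow_add, Nat.sub_add_cancel h]

lemma card_filter_le_val {k c : ℕ} :
    (Finset.univ.filter (fun a : Fin k => c ≤ (a : ℕ))).card = k - c := by
  rw [← Nat.card_Ico c k]
  refine Finset.card_nbij (fun a => (a : ℕ)) ?_ ?_ ?_
  · intro a ha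
    simp only [Finset.mem_coe, Finset.mem_filter, Finset.mem_univ, true_and] at ha
    simp [Finset.mem_Ico, ha, a.isLt]
  · intro a _ b _ h
    exact Fin.ext h
  · intro b hb
    simp only [Finset.coe_Ico, Set.mem_Ico] at hb
    exact ⟨⟨b, hb.2⟩, by simp [hb.1], rfl⟩

lemma sort_eq_ofFn {α : Type*} [LinearOrder α] (s : Finset α) {k : ℕ} (h : s.card = k) :
    s.sort (· ≤ ·) = List.ofFn (fun i => s.orderEmbOfFin h i) := by
  refine List.ext_getElem (by simp [h]) ?_
  intro i h1 h2
  rw [List.getElem_ofFn]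
  exact (Finset.orderEmbOfFin_apply s h ⟨i, by rwa [Finset.length_sort, h] at h1⟩).symm

end Aux

section Setup7

open Finset

variable {n : ℕ}

/-- The inclusion `Fin n → Fin (n + (n-1))`. -/
def embn (n : ℕ) : Fin n → Fin (n + (n - 1)) := Fin.castLE (Nat.le_add_right n (n - 1))

/-- The element `n + j` of `Fin (n + (n-1))`. -/
def yyn (n : ℕ) (j : Fin (n - 1)) : Fin (n + (n - 1)) :=
  ⟨n + (j : ℕ), by have := j.isLt; omega⟩

@[simp] lemma embn_val (i : Fin n) : ((embn n i : Fin (n + (n - 1))) : ℕ) = i := rfl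

@[simp] lemma yyn_val (j : Fin (n - 1)) : ((yyn n j : Fin (n + (n - 1))) : ℕ) = n + j := rfl

lemma embn_mono : StrictMono (embn n) := fun _ _ h => h

lemma yyn_mono : StrictMono (yyn n) := by
  intro a b hab
  rw [Fin.lt_def] at hab ⊢
  simpa using hab

lemma embn_inj {a b : Fin n} : embn n a = embn n b ↔ a = b := by
  rw [Fin.ext_iff, Fin.ext_iff, embn_val, embn_val]

lemma yyn_inj {a b : Fin (n - 1)} : yyn n a = yyn n b ↔ a = b := by
  rw [Fin.ext_iff, Fin.ext_iff, yyn_val, yyn_val]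
  omega

/-- The sorted first column of `R i`. -/
def fRn (n : ℕ) (i : Fin n) (k : Fin n) : Fin (n + (n - 1)) :=
  if (k : ℕ) = 0 then embn n i
  else ⟨n + (k : ℕ) - 1, by have := k.isLt; have := i.isLt; omega⟩

/-- The sorted second column of `R i`. -/
def gRn (n : ℕ) (i : Fin n) (k : Fin (n - 1)) : Fin (n + (n - 1)) :=
  if (k : ℕ) < (i : ℕ) then ⟨(k : ℕ), by have := k.isLt; omega⟩
  else ⟨(k : ℕ) + 1, by have := k.isLt; have := i.isLt; omega⟩

@[simp] lemma fRn_val (i k : Fin n) :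
    ((fRn n i k : Fin (n + (n - 1))) : ℕ) = if (k : ℕ) = 0 then (i : ℕ) else n + k - 1 := by
  rw [fRn]; split_ifs <;> rfl

@[simp] lemma gRn_val (i : Fin n) (k : Fin (n - 1)) :
    ((gRn n i k : Fin (n + (n - 1))) : ℕ) = if (k : ℕ) < (i : ℕ) then (k : ℕ) else k + 1 := by
  rw [gRn]; split_ifs <;> rfl

lemma fRn_mono (i : Fin n) : StrictMono (fRn n i) := by
  intro a b hab
  have hia := i.isLt
  rw [Fin.lt_def] at hab ⊢
  rw [fRn_val, fRn_val]
  split_ifs <;> omega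

lemma gRn_mono (i : Fin n) : StrictMono (gRn n i) := by
  intro a b hab
  rw [Fin.lt_def] at hab ⊢
  rw [gRn_val, gRn_val]
  split_ifs <;> omega

variable (T : Col n (n - 1))
  (hT : T.1 = Finset.univ.filter (fun x : Fin (n + (n - 1)) => (x : ℕ) < n))

include hT

lemma mem_T_iff (x : Fin (n + (n - 1))) : x ∈ T.1 ↔ (x : ℕ) < n := by
  rw [hT]; simp

lemma mem_Tc_iff (x : Fin (n + (n - 1))) : x ∈ T.1ᶜ ↔ n ≤ (x : ℕ) := by
  rw [Finset.mem_compl, mem_T_iff T hT]; omega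

lemma ordT : ⇑(T.1.orderEmbOfFin T.2) = embn n :=
  (Finset.orderEmbOfFin_unique T.2
    (fun i => (mem_T_iff T hT _).mpr (by simpa using i.isLt)) embn_mono).symm

lemma ordTc : ⇑((T.1ᶜ).orderEmbOfFin (card_compl' T)) = yyn n :=
  (Finset.orderEmbOfFin_unique (card_compl' T)
    (fun j => (mem_Tc_iff T hT _).mpr (by simp)) yyn_mono).symm

lemma yel_eq (j : Fin (n - 1)) : yel T j = yyn n j := congrFun (ordTc T hT) j

variable (R : Fin n → Col n (n - 1))
  (hR : ∀ i : Fin n, (R i).1 = insert (embn n i) T.1ᶜ)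

include hR

lemma compl_R (i : Fin n) : (R i).1ᶜ = T.1.erase (embn n i) := by
  ext x
  simp only [Finset.mem_compl, hR i, Finset.mem_insert, not_or, Finset.mem_compl, not_not,
    Finset.mem_erase]

lemma ordR (i : Fin n) : ⇑((R i).1.orderEmbOfFin (R i).2) = fRn n i := by
  refine (Finset.orderEmbOfFin_unique (R i).2 (fun k => ?_) (fRn_mono i)).symm
  rw [hR i, Finset.mem_insert]
  by_cases hk : (k : ℕ) = 0
  · left; rw [fRn, if_pos hk]
  · right
    rw [mem_Tc_iff T hT, fRn_val, if_neg hk]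
    have := k.isLt
    omega

lemma ordRc (i : Fin n) :
    ⇑((R i).1ᶜ.orderEmbOfFin (card_compl' (R i))) = gRn n i := by
  refine (Finset.orderEmbOfFin_unique (card_compl' (R i)) (fun k => ?_) (gRn_mono i)).symm
  rw [compl_R T hT R hR i, Finset.mem_erase, mem_T_iff T hT]
  have hk := k.isLt
  have hi := i.isLt
  refine ⟨?_, ?_⟩
  · rw [Ne, Fin.ext_iff, embn_val, gRn_val]
    split_ifs <;> omega
  · rw [gRn_val]
    split_ifs <;> omega

end Setup7

section Signs7

open Finset

variable {n : ℕ}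

/-- The first column after the swap: `insert (n+j) (T \ {i})`. -/
def DDset (n : ℕ) (T : Col n (n - 1)) (i : Fin n) (j : Fin (n - 1)) :
    Finset (Fin (n + (n - 1))) :=
  insert (yyn n j) (T.1.erase (embn n i))

variable (T : Col n (n - 1))
  (hT : T.1 = Finset.univ.filter (fun x : Fin (n + (n - 1)) => (x : ℕ) < n))

include hT

lemma DD_card (hn : 2 ≤ n) (i : Fin n) (j : Fin (n - 1)) : (DDset n T i j).card = n := by
  have h1 : embn n i ∈ T.1 := (mem_T_iff T hT _).mpr (by simpa using i.isLt)
  have h2 : yyn n j ∉ T.1.erase (embn n i) := by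
    intro h
    have := (mem_T_iff T hT _).mp (Finset.mem_of_mem_erase h)
    rw [yyn_val] at this
    omega
  rw [DDset, Finset.card_insert_of_notMem h2, Finset.card_erase_of_mem h1, T.2]
  omega

/-- The swapped column tabloid as an element of `Col`. -/
def DD (hn : 2 ≤ n) (i : Fin n) (j : Fin (n - 1)) : Col n (n - 1) :=
  ⟨DDset n T i j, DD_card T hT hn i j⟩

lemma sign1 (i : Fin n) (j : Fin (n - 1)) :
    invSign (replaceOne (T.1.sort (· ≤ ·)) (embn n i) (yyn n j)) =
      (-1) ^ (n - 1) * (-1) ^ (i : ℕ) := by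
  have hsort : T.1.sort (· ≤ ·) = List.ofFn (embn n) := by
    rw [sort_eq_ofFn T.1 T.2, ordT T hT]
  rw [replaceOne, hsort, List.map_ofFn]
  have hfe : ((fun z => if z = embn n i then yyn n j else z) ∘ embn n) =
      (fun a : Fin n => if a = i then yyn n j else embn n a) := by
    funext a
    simp only [Function.comp_apply]
    by_cases h : a = i
    · rw [if_pos (by rw [h]), if_pos h]
    · rw [if_neg (fun hc => h (embn_inj.mp hc)), if_neg h]
  rw [hfe]
  unfold invSign
  rw [invCount_replace (embn n) embn_mono i (yyn n j)]
  have hset : (Finset.univ.filter (fun a : Fin n =>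
      (a < i ∧ yyn n j < embn n a) ∨ (i < a ∧ embn n a < yyn n j))) = Finset.Ioi i := by
    ext a
    simp only [Finset.mem_filter, Finset.mem_univ, true_and, Finset.mem_Ioi, Fin.lt_def,
      yyn_val, embn_val]
    have := a.isLt
    omega
  rw [hset, Fin.card_Ioi, neg_one_pow_sub' (by have := i.isLt; omega : (i : ℕ) ≤ n - 1)]

lemma sign2 (i : Fin n) (j : Fin (n - 1)) :
    invSign (replaceOne ((T.1ᶜ).sort (· ≤ ·)) (yyn n j) (embn n i)) = (-1) ^ (j : ℕ) := by
  have hsort : (T.1ᶜ).sort (· ≤ ·) = List.ofFn (yyn n) := by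
    rw [sort_eq_ofFn (T.1ᶜ) (card_compl' T), ordTc T hT]
  rw [replaceOne, hsort, List.map_ofFn]
  have hfe : ((fun z => if z = yyn n j then embn n i else z) ∘ yyn n) =
      (fun b : Fin (n - 1) => if b = j then embn n i else yyn n b) := by
    funext b
    simp only [Function.comp_apply]
    by_cases h : b = j
    · rw [if_pos (by rw [h]), if_pos h]
    · rw [if_neg (fun hc => h (yyn_inj.mp hc)), if_neg h]
  rw [hfe]
  unfold invSign
  rw [invCount_replace (yyn n) yyn_mono j (embn n i)]
  have hset : (Finset.univ.filter (fun b : Fin (n - 1) =>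
      (b < j ∧ embn n i < yyn n b) ∨ (j < b ∧ yyn n b < embn n i))) = Finset.Iio j := by
    ext b
    simp only [Finset.mem_filter, Finset.mem_univ, true_and, Finset.mem_Iio, Fin.lt_def,
      yyn_val, embn_val]
    have := i.isLt
    omega
  rw [hset, Fin.card_Iio]

lemma sign3 (i : Fin n) :
    invSign ((T.1ᶜ).sort (· ≤ ·) ++ [T.1.orderEmbOfFin T.2 i]) = (-1) ^ (n - 1) := by
  have hsort : (T.1ᶜ).sort (· ≤ ·) = List.ofFn (yyn n) := by
    rw [sort_eq_ofFn (T.1ᶜ) (card_compl' T), ordTc T hT]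
  rw [hsort, show T.1.orderEmbOfFin T.2 i = embn n i from congrFun (ordT T hT) i]
  unfold invSign
  rw [invCount_sorted_append (yyn n) yyn_mono (embn n i)]
  have hset : (Finset.univ.filter (fun b : Fin (n - 1) => embn n i < yyn n b)) =
      Finset.univ := by
    refine Finset.filter_true_of_mem fun b _ => ?_
    rw [Fin.lt_def, embn_val, yyn_val]
    have := i.isLt
    omega
  rw [hset, Finset.card_univ, Fintype.card_fin]

variable (R : Fin n → Col n (n - 1))
  (hR : ∀ i : Fin n, (R i).1 = insert (embn n i) T.1ᶜ)

include hR

lemma sortRc (i : Fin n) : (R i).1ᶜ.sort (· ≤ ·) = List.ofFn (gRn n i) := by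
  rw [sort_eq_ofFn ((R i).1ᶜ) (card_compl' (R i)), ordRc T hT R hR i]

lemma sign4a (i : Fin n) (k : Fin n) (hk : (k : ℕ) = 0) :
    invSign ((R i).1ᶜ.sort (· ≤ ·) ++ [(R i).1.orderEmbOfFin (R i).2 k]) =
      (-1) ^ (n - 1) * (-1) ^ (i : ℕ) := by
  rw [sortRc T hT R hR i,
    show (R i).1.orderEmbOfFin (R i).2 k = embn n i from by
      rw [congrFun (ordR T hT R hR i) k, fRn, if_pos hk]]
  unfold invSign
  rw [invCount_sorted_append (gRn n i) (gRn_mono i) (embn n i)]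
  have hset : (Finset.univ.filter (fun b : Fin (n - 1) => embn n i < gRn n i b)) =
      (Finset.univ.filter (fun b : Fin (n - 1) => (i : ℕ) ≤ (b : ℕ))) := by
    ext b
    simp only [Finset.mem_filter, Finset.mem_univ, true_and, Fin.lt_def, embn_val, gRn_val]
    split_ifs <;> omega
  rw [hset, card_filter_le_val,
    neg_one_pow_sub' (by have := i.isLt; omega : (i : ℕ) ≤ n - 1)]

lemma sign4b (i : Fin n) (k : Fin n) (hk : (k : ℕ) ≠ 0) :
    invSign ((R i).1ᶜ.sort (· ≤ ·) ++ [(R i).1.orderEmbOfFin (R i).2 k]) = 1 := by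
  rw [sortRc T hT R hR i, congrFun (ordR T hT R hR i) k]
  unfold invSign
  rw [invCount_sorted_append (gRn n i) (gRn_mono i) (fRn n i k)]
  have hset : (Finset.univ.filter (fun b : Fin (n - 1) => fRn n i k < gRn n i b)) =
      (∅ : Finset (Fin (n - 1))) := by
    refine Finset.filter_false_of_mem fun b _ => ?_
    rw [Fin.lt_def, fRn_val, gRn_val]
    have := b.isLt
    have := i.isLt
    split_ifs <;> omega
  rw [hset, Finset.card_empty, pow_zero]

end Signs7

section Expand7

open Finset

variable {n : ℕ}

variable (T : Col n (n - 1))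
  (hT : T.1 = Finset.univ.filter (fun x : Fin (n + (n - 1)) => (x : ℕ) < n))
  (R : Fin n → Col n (n - 1))
  (hR : ∀ i : Fin n, (R i).1 = insert (embn n i) T.1ᶜ)

include hT

lemma lhs_eq (hn : 2 ≤ n) :
    etaBasis T = ((n - 1 : ℕ) : ℂ) • delta T -
      ∑ j : Fin (n - 1), ∑ i : Fin n,
        (((-1 : ℂ)) ^ (n - 1) * (-1) ^ (i : ℕ) * (-1) ^ (j : ℕ)) •
          delta (DD T hT hn i j) := by
  simp only [etaBasis]
  congr 1
  refine Finset.sum_congr rfl fun j _ => ?_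
  refine Finset.sum_nbij'
    (i := fun x : {a // a ∈ T.1} =>
      (⟨(x.1 : ℕ), by have := x.2; rwa [mem_T_iff T hT] at this⟩ : Fin n))
    (j := fun a : Fin n =>
      (⟨embn n a, (mem_T_iff T hT _).mpr (by simpa using a.isLt)⟩ : {a // a ∈ T.1}))
    (fun a _ => Finset.mem_univ _) (fun a _ => Finset.mem_attach _ _) ?_ ?_ ?_
  · intro x _
    exact Subtype.ext (Fin.ext rfl)
  · intro a _
    exact Fin.ext rfl
  · intro x _
    have hlt : (x.1 : ℕ) < n := by have := x.2; rwa [mem_T_iff T hT] at this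
    have key : swapTerm T x j =
        (((-1 : ℂ)) ^ (n - 1) * (-1) ^ ((⟨(x.1 : ℕ), hlt⟩ : Fin n) : ℕ) * (-1) ^ (j : ℕ)) •
          delta (DD T hT hn ⟨(x.1 : ℕ), hlt⟩ j) := by
      have hx : x.1 = embn n ⟨(x.1 : ℕ), hlt⟩ := Fin.ext rfl
      simp only [swapTerm]
      have hc : invSign (replaceOne (T.1.sort (· ≤ ·)) x.1 (yel T j)) *
          invSign (replaceOne ((T.1ᶜ).sort (· ≤ ·)) (yel T j) x.1) =
          ((-1 : ℂ)) ^ (n - 1) * (-1) ^ ((⟨(x.1 : ℕ), hlt⟩ : Fin n) : ℕ) * (-1) ^ (j : ℕ) := by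
        rw [yel_eq T hT j]
        conv_lhs => rw [hx]
        rw [sign1 T hT _ j, sign2 T hT _ j]
      have hd : delta (⟨swapSet T x.1 j, swapSet_card T x.2 j⟩ : Col n (n - 1)) =
          delta (DD T hT hn ⟨(x.1 : ℕ), hlt⟩ j) := by
        refine congrArg delta (Subtype.ext ?_)
        show swapSet T x.1 j = DDset n T ⟨(x.1 : ℕ), hlt⟩ j
        rw [swapSet, DDset, yel_eq T hT j]
        conv_lhs => rw [hx]
      rw [hc, hd]
    exact key

include hR

lemma phiT_eq (hn : 2 ≤ n) (h' : n = n - 1 + 1) :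
    phiBasis h' T = delta T - ∑ i : Fin n, ((-1 : ℂ)) ^ (i : ℕ) • delta (R i) := by
  simp only [phiBasis]
  congr 1
  refine Finset.sum_congr rfl fun i _ => ?_
  rw [sign3 T hT i]
  refine congrArg₂ (· • ·) ?_ (congrArg delta (Subtype.ext ?_))
  · rw [neg_one_pow_sub' (by have := i.isLt; omega : (i : ℕ) ≤ n - 1),
      mul_comm (((-1 : ℂ)) ^ (n - 1)) (((-1 : ℂ)) ^ (i : ℕ)), mul_assoc,
      neg_one_pow_mul_self, mul_one]
  · show insert (T.1.orderEmbOfFin T.2 i) T.1ᶜ = (R i).1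
    rw [congrFun (ordT T hT) i, ← hR i]

lemma phiR_eq (hn : 2 ≤ n) (h' : n = n - 1 + 1) (i : Fin n) :
    phiBasis h' (R i) = delta (R i) - ((-1 : ℂ)) ^ (i : ℕ) • delta T -
      ∑ k : Fin (n - 1), (((-1 : ℂ)) ^ n * (-1) ^ (k : ℕ)) • delta (DD T hT hn i k) := by
  simp only [phiBasis]
  have hz : (0 : ℕ) < n := by omega
  rw [← Finset.add_sum_erase Finset.univ _ (Finset.mem_univ (⟨0, hz⟩ : Fin n)),
    sub_add_eq_sub_sub]
  congr 1
  · congr 1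
    rw [sign4a T hT R hR i ⟨0, hz⟩ rfl]
    refine congrArg₂ (· • ·) ?_ (congrArg delta (Subtype.ext ?_))
    · show ((-1 : ℂ)) ^ (n - 1 - ((⟨0, hz⟩ : Fin n) : ℕ)) * _ = _
      norm_num
      rw [← mul_assoc, neg_one_pow_mul_self, one_mul]
    · show insert ((R i).1.orderEmbOfFin (R i).2 ⟨0, hz⟩) (R i).1ᶜ = T.1
      rw [congrFun (ordR T hT R hR i) ⟨0, hz⟩, compl_R T hT R hR i,
        show fRn n i ⟨0, hz⟩ = embn n i from by rw [fRn, if_pos rfl]]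
      exact Finset.insert_erase ((mem_T_iff T hT _).mpr (by simpa using i.isLt))
  · refine Finset.sum_nbij'
      (i := fun k : Fin n => (⟨(k : ℕ) - 1, by have := k.isLt; omega⟩ : Fin (n - 1)))
      (j := fun k : Fin (n - 1) => (⟨(k : ℕ) + 1, by have := k.isLt; omega⟩ : Fin n))
      (fun k _ => Finset.mem_univ _) ?_ ?_ ?_ ?_
    · intro k _
      refine Finset.mem_erase.mpr ⟨?_, Finset.mem_univ _⟩
      rw [Ne, Fin.ext_iff]
      simp
    · intro k hk
      have hk0 : (k : ℕ) ≠ 0 := by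
        have := Finset.mem_erase.mp hk
        rw [Ne, Fin.ext_iff] at this
        simpa using this.1
      exact Fin.ext (by show (k : ℕ) - 1 + 1 = (k : ℕ); omega)
    · intro k _
      exact Fin.ext (by show (k : ℕ) + 1 - 1 = (k : ℕ); omega)
    · intro k hk
      have hk0 : (k : ℕ) ≠ 0 := by
        have := Finset.mem_erase.mp hk
        rw [Ne, Fin.ext_iff] at this
        simpa using this.1
      have hkn := k.isLt
      rw [sign4b T hT R hR i k hk0, mul_one]
      refine congrArg₂ (· • ·) ?_ (congrArg delta (Subtype.ext ?_))
      · show ((-1 : ℂ)) ^ (n - 1 - (k : ℕ)) = ((-1 : ℂ)) ^ n * (-1) ^ (((⟨(k : ℕ) - 1, _⟩ : Fin (n - 1))) : ℕ)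
        rw [show n - 1 - (k : ℕ) = (n - 2) - ((k : ℕ) - 1) from by omega,
          neg_one_pow_sub' (by omega : (k : ℕ) - 1 ≤ n - 2),
          show ((-1 : ℂ)) ^ (n - 2) = (-1) ^ n from by
            conv_rhs => rw [show n = (n - 2) + 2 from by omega]
            rw [pow_add]
            norm_num]
      · show insert ((R i).1.orderEmbOfFin (R i).2 k) (R i).1ᶜ = DDset n T i _
        rw [congrFun (ordR T hT R hR i) k, compl_R T hT R hR i, DDset]
        congr 1
        refine Fin.ext ?_
        rw [fRn_val, if_neg hk0, yyn_val]
        show n + (k : ℕ) - 1 = n + ((k : ℕ) - 1)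
        omega

end Expand7

/-- For `T = {1,…,n}` and `R_i = {i} ∪ {n+1,…,2n-1}`
(`1 ≤ i ≤ n`), one has `η(v_T) = -(φ(v_T) + ∑_{i=1}^n (-1)^{i-1} φ(v_{R_i}))`.
(Here `{1, …, 2n-1}` is identified with `Fin (n + (n-1))` via `x ↦ x - 1`, so
`T` corresponds to the set of the `n` smallest elements and `R_i` to
`{i - 1} ∪ Tᶜ`.) -/
theorem eta_vT_in_terms_of_phi (n : ℕ) (hn : 2 ≤ n)
    (T : Col n (n - 1))
    (hT : T.1 = Finset.univ.filter (fun x : Fin (n + (n - 1)) => (x : ℕ) < n))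
    (R : Fin n → Col n (n - 1))
    (hR : ∀ i : Fin n, (R i).1 = insert (Fin.castLE (by omega) i) T.1ᶜ) :
    etaFun (delta T) =
      -(phiFun (by omega) (delta T) +
        ∑ i : Fin n, (-1 : ℂ) ^ (i : ℕ) • phiFun (by omega) (delta (R i))) := by
  have hR' : ∀ i : Fin n, (R i).1 = insert (embn n i) T.1ᶜ := hR
  simp only [etaFun, phiFun, delta_sum_smul]
  rw [lhs_eq T hT hn, phiT_eq T hT R hR' hn]
  have hsum : ∀ (h' : n = n - 1 + 1),
      ∑ i : Fin n, (-1 : ℂ) ^ (i : ℕ) • phiBasis h' (R i) =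
      ∑ i : Fin n, (-1 : ℂ) ^ (i : ℕ) •
        (delta (R i) - ((-1 : ℂ)) ^ (i : ℕ) • delta T -
          ∑ k : Fin (n - 1), (((-1 : ℂ)) ^ n * (-1) ^ (k : ℕ)) • delta (DD T hT hn i k)) :=
    fun h' => Finset.sum_congr rfl fun i _ => by rw [phiR_eq T hT R hR' hn h' i]
  rw [hsum]
  have hc : ∀ (i : Fin n) (k : Fin (n - 1)),
      ((-1 : ℂ)) ^ (i : ℕ) * (((-1 : ℂ)) ^ n * (-1) ^ (k : ℕ)) =
        -(((-1 : ℂ)) ^ (n - 1) * (-1) ^ (i : ℕ) * (-1) ^ (k : ℕ)) := by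
    intro i k
    have hn1 : ((-1 : ℂ)) ^ n = -((-1 : ℂ)) ^ (n - 1) := by
      conv_lhs => rw [show n = (n - 1) + 1 from by omega]
      rw [pow_succ]
      ring
    rw [hn1]
    ring
  simp only [smul_sub, smul_smul, neg_one_pow_mul_self, one_smul, Finset.smul_sum,
    Finset.sum_sub_distrib, Finset.sum_const, Finset.card_univ, Fintype.card_fin, hc,
    neg_smul, Finset.sum_neg_distrib]
  conv_lhs => rw [Finset.sum_comm]
  rw [show ((n - 1 : ℕ) : ℂ) • (delta T : Mt n (n - 1)) = (n : ℕ) • delta T - delta T from by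
    rw [Nat.cast_smul_eq_nsmul, eq_sub_iff_add_eq, ← succ_nsmul]
    congr 1
    omega]
  abel
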